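/- Let E be a separable reflexive Banach space and let (ũ_m)_{m∈ℕ} be measurable E-valued stochastic processes on [0,∞) defined on a probability space (Ω,𝔉,ℙ), each stationary in the classical sense: for every τ ≥ 0, every n ∈ ℕ and all t_1,…,t_n ∈ [0,∞), the joint law of (ũ_m(t_1+τ),…,ũ_m(t_n+τ)) on Eⁿ equals the joint law of (ũ_m(t_1),…,ũ_m(t_n)). Assume that for every T > 0, sup_{m∈ℕ} 𝔼[ sup_{t∈[0,T]} ‖ũ_m(t)‖_E ] < ∞, and that ℙ-almost surely ũ_m → ũ in C_loc([0,∞); (E, weak)), i.e., for every f ∈ E* the real functions t ↦ f(ũ_m(t)) converge to t ↦ f(ũ(t)) uniformly on every compact subset of [0,∞). Then ũ is stationary in the classical sense: for every τ ≥ 0 and all t_1,…,t_n ∈ [0,∞), the joint law of (ũ(t_1+τ),…,ũ(t_n+τ)) equals that of (ũ(t_1),…,ũ(t_n)) on Eⁿ. -/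

import Mathlib

open MeasureTheory Filter
open scoped BoundedContinuousFunction NNReal

theorem sep_family {E : Type*} [NormedAddCommGroup E] [NormedSpace ℝ E]
    [SecondCountableTopology E] :
    ∃ φ : ℕ → StrongDual ℝ E, ∀ a b : E, (∀ k, φ k a = φ k b) → a = b := by
  obtain ⟨x, hx⟩ := TopologicalSpace.exists_dense_seq E
  choose φ hφ1 hφ2 using fun k => exists_dual_vector'' ℝ (x k)
  refine ⟨φ, fun a b hab => ?_⟩
  by_contra h
  have hne : a - b ≠ 0 := sub_ne_zero.mpr h
  have hpos : 0 < ‖a - b‖ := norm_pos_iff.mpr hne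
  obtain ⟨k, hk⟩ := Metric.denseRange_iff.mp hx (a - b) (‖a - b‖ / 4) (by linarith)
  have h0 : φ k (a - b) = 0 := by simp [map_sub, hab k]
  have h1 : ‖x k‖ ≤ ‖x k - (a - b)‖ := by
    have he : (‖x k‖ : ℝ) = φ k (x k - (a - b)) := by
      rw [map_sub, h0, sub_zero, hφ2]; simp
    calc ‖x k‖ = φ k (x k - (a - b)) := he
    _ ≤ ‖φ k (x k - (a - b))‖ := le_abs_self _
    _ ≤ ‖φ k‖ * ‖x k - (a - b)‖ := (φ k).le_opNorm _
    _ ≤ 1 * ‖x k - (a - b)‖ := mul_le_mul_of_nonneg_right (hφ1 k) (norm_nonneg _)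
    _ = ‖x k - (a - b)‖ := one_mul _
  have hd : dist (a - b) (x k) = ‖a - b - x k‖ := dist_eq_norm _ _
  have h2 : ‖a - b‖ ≤ ‖a - b - x k‖ + ‖x k‖ := by
    have := norm_add_le (a - b - x k) (x k); simpa using this
  have h3 : ‖x k - (a - b)‖ = ‖a - b - x k‖ := norm_sub_rev _ _
  linarith


/-- Classical stationarity is preserved under a.s. convergence in
`C_loc([0,∞); (E, weak))` together with a uniform bound on `𝔼[sup_{[0,T]} ‖·‖]`.
Here `E` is a separable reflexive Banach space (reflexivity being expressed by the
surjectivity of the canonical embedding into the double dual). -/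
theorem stmt1
    {Ω : Type*} [MeasurableSpace Ω] (ℙ : Measure Ω) [IsProbabilityMeasure ℙ]
    {E : Type*} [NormedAddCommGroup E] [NormedSpace ℝ E] [CompleteSpace E]
    [SecondCountableTopology E] [MeasurableSpace E] [BorelSpace E]
    (hrefl : Function.Surjective ⇑(NormedSpace.inclusionInDoubleDual ℝ E))
    (u : ℕ → Ω → ℝ → E) (v : Ω → ℝ → E)
    (humeas : ∀ m (t : ℝ), Measurable fun ω => u m ω t)
    (hvmeas : ∀ t : ℝ, Measurable fun ω => v ω t)
    (hustat : ∀ m (τ : ℝ), 0 ≤ τ → ∀ (n : ℕ) (t : Fin n → ℝ), (∀ i, 0 ≤ t i) →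
      Measure.map (fun ω i => u m ω (t i + τ)) ℙ =
        Measure.map (fun ω i => u m ω (t i)) ℙ)
    (hbound : ∀ T : ℝ, 0 < T → ∃ C : ENNReal, C ≠ ⊤ ∧ ∀ m,
      ∫⁻ ω, ⨆ t ∈ Set.Icc (0 : ℝ) T, (‖u m ω t‖₊ : ENNReal) ∂ℙ ≤ C)
    (hconv : ∀ᵐ ω ∂ℙ, ∀ φ : StrongDual ℝ E, ∀ K : Set ℝ,
      K ⊆ Set.Ici (0 : ℝ) → IsCompact K →
      TendstoUniformlyOn (fun m t => φ (u m ω t)) (fun t => φ (v ω t)) atTop K) :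
    ∀ (τ : ℝ), 0 ≤ τ → ∀ (n : ℕ) (t : Fin n → ℝ), (∀ i, 0 ≤ t i) →
      Measure.map (fun ω i => v ω (t i + τ)) ℙ =
        Measure.map (fun ω i => v ω (t i)) ℙ := by
  intro τ hτ n t ht
  obtain ⟨φ, hsep⟩ := sep_family (E := E)
  set J : (Fin n → E) → (Fin n → ℕ → ℝ) := fun x i k => φ k (x i) with hJdef
  have Jcont : Continuous J := continuous_pi fun i => continuous_pi fun k =>
    (φ k).continuous.comp (continuous_apply i)
  have Jinj : Function.Injective J := by
    intro x y hxy
    funext i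
    exact hsep _ _ fun k => congrFun (congrFun hxy i) k
  have hJ : MeasurableEmbedding J := Jcont.measurableEmbedding Jinj
  have hvs : Measurable (fun ω i => v ω (t i + τ) : Ω → Fin n → E) :=
    measurable_pi_lambda _ fun i => hvmeas _
  have hvu : Measurable (fun ω i => v ω (t i) : Ω → Fin n → E) :=
    measurable_pi_lambda _ fun i => hvmeas _
  -- general convergence lemma
  have hlim : ∀ s : Fin n → ℝ, (∀ i, 0 ≤ s i) → ∀ f : (Fin n → ℕ → ℝ) →ᵇ ℝ≥0,
      Tendsto (fun m => ∫⁻ ω, (f (J (fun i => u m ω (s i))) : ENNReal) ∂ℙ) atTop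
        (nhds (∫⁻ ω, (f (J (fun i => v ω (s i))) : ENNReal) ∂ℙ)) := by
    intro s hs f
    have hgm : Measurable fun x : Fin n → E => (f (J x) : ENNReal) :=
      measurable_coe_nnreal_ennreal.comp (f.continuous.comp Jcont).measurable
    obtain ⟨C, hC⟩ := f.bounded
    set x₀ : Fin n → ℕ → ℝ := fun _ _ => 0 with hx₀
    have hC0 : 0 ≤ C := le_trans dist_nonneg (hC x₀ x₀)
    have hfb : ∀ x, (f x : ENNReal) ≤ (f x₀ : ENNReal) + ENNReal.ofReal C := by
      intro x
      have h1 : dist (f x) (f x₀) ≤ C := hC x x₀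
      have h2 : (f x : ℝ) ≤ (f x₀ : ℝ) + C := by
        have := abs_sub_abs_le_abs_sub (f x : ℝ) (f x₀ : ℝ)
        rw [NNReal.dist_eq] at h1
        have hax : |(f x : ℝ)| = (f x : ℝ) := abs_of_nonneg (f x).coe_nonneg
        have hay : |(f x₀ : ℝ)| = (f x₀ : ℝ) := abs_of_nonneg (f x₀).coe_nonneg
        have := le_trans (sub_le_iff_le_add.mpr (le_add_of_sub_left_le
          (le_trans (le_abs_self _) h1))) (le_refl _)
        linarith [le_trans (le_abs_self ((f x : ℝ) - (f x₀ : ℝ))) h1]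
      calc (f x : ENNReal) = ENNReal.ofReal (f x : ℝ) := ENNReal.ofReal_coe_nnreal.symm
      _ ≤ ENNReal.ofReal ((f x₀ : ℝ) + C) := ENNReal.ofReal_le_ofReal h2
      _ = (f x₀ : ENNReal) + ENNReal.ofReal C := by
          rw [ENNReal.ofReal_add (f x₀).coe_nonneg hC0, ENNReal.ofReal_coe_nnreal]
    refine tendsto_lintegral_of_dominated_convergence
      (fun _ => (f x₀ : ENNReal) + ENNReal.ofReal C)
      (fun m => hgm.comp (measurable_pi_lambda _ fun i => humeas m _)) ?_ ?_ ?_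
    · intro m
      exact Filter.Eventually.of_forall fun ω => hfb _
    · simp [lintegral_const, ENNReal.add_ne_top, ENNReal.ofReal_ne_top]
    · filter_upwards [hconv] with ω hω
      have hptw : ∀ i k, Tendsto (fun m => φ k (u m ω (s i))) atTop
          (nhds (φ k (v ω (s i)))) := by
        intro i k
        exact (hω (φ k) {s i} (by rintro x rfl; exact hs i) isCompact_singleton).tendsto_at
          rfl
      have hJt : Tendsto (fun m => J (fun i => u m ω (s i))) atTop
          (nhds (J (fun i => v ω (s i)))) := by
        rw [tendsto_pi_nhds]
        intro i
        rw [tendsto_pi_nhds]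
        intro k
        exact hptw i k
      exact (ENNReal.continuous_coe.tendsto _).comp ((f.continuous.tendsto _).comp hJt)
  -- the shifted and unshifted approximating integrals coincide
  have hmeq : ∀ f : (Fin n → ℕ → ℝ) →ᵇ ℝ≥0, ∀ m,
      ∫⁻ ω, (f (J (fun i => u m ω (t i + τ))) : ENNReal) ∂ℙ =
      ∫⁻ ω, (f (J (fun i => u m ω (t i))) : ENNReal) ∂ℙ := by
    intro f m
    have hgm : Measurable fun x : Fin n → E => (f (J x) : ENNReal) :=
      measurable_coe_nnreal_ennreal.comp (f.continuous.comp Jcont).measurable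
    calc ∫⁻ ω, (f (J (fun i => u m ω (t i + τ))) : ENNReal) ∂ℙ
        = ∫⁻ x, (f (J x) : ENNReal) ∂(Measure.map (fun ω i => u m ω (t i + τ)) ℙ) :=
          (lintegral_map hgm (measurable_pi_lambda _ fun i => humeas m _)).symm
    _ = ∫⁻ x, (f (J x) : ENNReal) ∂(Measure.map (fun ω i => u m ω (t i)) ℙ) := by
          rw [hustat m τ hτ n t ht]
    _ = ∫⁻ ω, (f (J (fun i => u m ω (t i))) : ENNReal) ∂ℙ :=
          lintegral_map hgm (measurable_pi_lambda _ fun i => humeas m _)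
  -- equality after pushforward by J
  have key : Measure.map (fun ω => J (fun i => v ω (t i + τ))) ℙ =
      Measure.map (fun ω => J (fun i => v ω (t i))) ℙ := by
    haveI : IsProbabilityMeasure (Measure.map (fun ω => J (fun i => v ω (t i + τ))) ℙ) :=
      Measure.isProbabilityMeasure_map ((hJ.measurable.comp hvs).aemeasurable)
    haveI : IsProbabilityMeasure (Measure.map (fun ω => J (fun i => v ω (t i))) ℙ) :=
      Measure.isProbabilityMeasure_map ((hJ.measurable.comp hvu).aemeasurable)
    apply ext_of_forall_lintegral_eq_of_IsFiniteMeasure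
    intro f
    have hfm : Measurable fun y : Fin n → ℕ → ℝ => (f y : ENNReal) :=
      measurable_coe_nnreal_ennreal.comp f.continuous.measurable
    have e1 : ∫⁻ x, (f x : ENNReal) ∂(Measure.map (fun ω => J (fun i => v ω (t i + τ))) ℙ)
        = ∫⁻ ω, (f (J (fun i => v ω (t i + τ))) : ENNReal) ∂ℙ :=
      lintegral_map hfm (hJ.measurable.comp hvs)
    have e2 : ∫⁻ x, (f x : ENNReal) ∂(Measure.map (fun ω => J (fun i => v ω (t i))) ℙ)
        = ∫⁻ ω, (f (J (fun i => v ω (t i))) : ENNReal) ∂ℙ :=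
      lintegral_map hfm (hJ.measurable.comp hvu)
    rw [e1, e2]
    have h1 := hlim (fun i => t i + τ) (fun i => add_nonneg (ht i) hτ) f
    have h2 := hlim t ht f
    have heq : (fun m => ∫⁻ ω, (f (J (fun i => u m ω (t i + τ))) : ENNReal) ∂ℙ) =
        fun m => ∫⁻ ω, (f (J (fun i => u m ω (t i))) : ENNReal) ∂ℙ :=
      funext fun m => hmeq f m
    rw [heq] at h1
    exact tendsto_nhds_unique h1 h2
  -- conclude via the measurable embedding
  have hJmap : Measure.map J (Measure.map (fun ω i => v ω (t i + τ)) ℙ) =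
      Measure.map J (Measure.map (fun ω i => v ω (t i)) ℙ) := by
    rw [Measure.map_map hJ.measurable hvs, Measure.map_map hJ.measurable hvu]
    exact key
  ext s hs
  have h1 := congrArg (fun μ => μ (J '' s)) hJmap
  simpa [hJ.map_apply, Jinj.preimage_image] using h1
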